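/- Let p be a C¹ function on [t₀, ∞) with p(t) ~ t^{-α} and p'(t) ~ -α t^{-α-1} as t → ∞, for some α > 0, and let q be a C¹ function with q(t) ~ t and q'(t) ~ 1 as t → ∞. Let x(t) = p(t) sin q(t) and y(t) = x'(t) = p'(t) sin q(t) + p(t) q'(t) cos q(t). Then r(t) = √(x(t)² + y(t)²) satisfies r(t) ~ t^{-α} as t → ∞. -/

import Mathlib

open Real Filter Set

lemma stmt_3_aux (a b c s co : ℝ) (h : s ^ 2 + co ^ 2 = 1) :
    |a ^ 2 * s ^ 2 + (b * s + a * c * co) ^ 2 - 1| ≤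
      |a ^ 2 - 1| + (|b| + |a * c - 1|) * (|b| + |a * c + 1|) := by
  have hs : |s| ≤ 1 := by nlinarith [sq_nonneg s, sq_nonneg co, abs_nonneg s, sq_abs s]
  have hco : |co| ≤ 1 := by nlinarith [sq_nonneg s, sq_nonneg co, abs_nonneg co, sq_abs co]
  have key : a ^ 2 * s ^ 2 + (b * s + a * c * co) ^ 2 - 1
      = (a ^ 2 - 1) * s ^ 2 + ((b * s + a * c * co) ^ 2 - co ^ 2) := by
    linear_combination h
  rw [key]
  refine (abs_add_le _ _).trans (add_le_add ?_ ?_)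
  · rw [abs_mul, abs_pow, sq_abs]
    calc |a ^ 2 - 1| * s ^ 2 ≤ |a ^ 2 - 1| * 1 := by
          refine mul_le_mul_of_nonneg_left ?_ (abs_nonneg _)
          nlinarith [sq_abs s]
      _ = |a ^ 2 - 1| := mul_one _
  · have factored : (b * s + a * c * co) ^ 2 - co ^ 2
        = (b * s + (a * c - 1) * co) * (b * s + (a * c + 1) * co) := by ring
    rw [factored, abs_mul]
    have h1 : |b * s + (a * c - 1) * co| ≤ |b| + |a * c - 1| := by
      refine (abs_add_le _ _).trans (add_le_add ?_ ?_)
      · rw [abs_mul]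
        calc |b| * |s| ≤ |b| * 1 := mul_le_mul_of_nonneg_left hs (abs_nonneg _)
          _ = |b| := mul_one _
      · rw [abs_mul]
        calc |a * c - 1| * |co| ≤ |a * c - 1| * 1 :=
            mul_le_mul_of_nonneg_left hco (abs_nonneg _)
          _ = |a * c - 1| := mul_one _
    have h2 : |b * s + (a * c + 1) * co| ≤ |b| + |a * c + 1| := by
      refine (abs_add_le _ _).trans (add_le_add ?_ ?_)
      · rw [abs_mul]
        calc |b| * |s| ≤ |b| * 1 := mul_le_mul_of_nonneg_left hs (abs_nonneg _)
          _ = |b| := mul_one _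
      · rw [abs_mul]
        calc |a * c + 1| * |co| ≤ |a * c + 1| * 1 :=
            mul_le_mul_of_nonneg_left hco (abs_nonneg _)
          _ = |a * c + 1| := mul_one _
    exact mul_le_mul h1 h2 (abs_nonneg _) (by positivity)

/-- If `p(t) ~ t^{-α}`, `p'(t) ~ -α t^{-α-1}` (α > 0), `q(t) ~ t`, `q'(t) ~ 1` as `t → ∞`,
then for `x(t) = p(t) sin q(t)` and `y(t) = x'(t)` the radius
`r(t) = √(x(t)² + y(t)²)` satisfies `r(t) ~ t^{-α}` as `t → ∞`. -/
theorem stmt_3 (α t₀ : ℝ) (hα : 0 < α) (p q : ℝ → ℝ)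
    (hp_diff : Differentiable ℝ p) (hq_diff : Differentiable ℝ q)
    (hp : Tendsto (fun t => p t / t ^ (-α)) atTop (nhds 1))
    (hp' : Tendsto (fun t => deriv p t / (-α * t ^ (-α - 1))) atTop (nhds 1))
    (hq : Tendsto (fun t => q t / t) atTop (nhds 1))
    (hq' : Tendsto (fun t => deriv q t) atTop (nhds 1)) :
    Tendsto
      (fun t => Real.sqrt ((p t * Real.sin (q t)) ^ 2 +
        (deriv p t * Real.sin (q t) + p t * deriv q t * Real.cos (q t)) ^ 2) / t ^ (-α))
      atTop (nhds 1) := by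
  -- notation
  set a : ℝ → ℝ := fun t => p t / t ^ (-α) with ha_def
  set b : ℝ → ℝ := fun t => deriv p t / t ^ (-α) with hb_def
  -- b → 0
  have hb : Tendsto b atTop (nhds 0) := by
    have h1 : Tendsto (fun t : ℝ => -α / t) atTop (nhds 0) :=
      tendsto_const_nhds.div_atTop tendsto_id
    have h2 := hp'.mul h1
    rw [one_mul] at h2
    refine h2.congr' ?_
    filter_upwards [eventually_gt_atTop (0 : ℝ)] with t ht
    have hT : (0:ℝ) < t ^ (-α) := Real.rpow_pos_of_pos ht _
    have hT2 : (0:ℝ) < t ^ (-α - 1) := Real.rpow_pos_of_pos ht _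
    have hrw : t ^ (-α - 1) * t = t ^ (-α) := by
      rw [show -α - 1 = -α + (-1) by ring, Real.rpow_add ht, Real.rpow_neg_one]
      field_simp
    simp only [hb_def]
    field_simp
    linear_combination deriv p t * hrw.symm
  have hone : Tendsto (fun _ : ℝ => (1:ℝ)) atTop (nhds 1) := tendsto_const_nhds
  -- the squared ratio tends to 1
  have hE : Tendsto
      (fun t => ((p t * Real.sin (q t)) ^ 2 +
        (deriv p t * Real.sin (q t) + p t * deriv q t * Real.cos (q t)) ^ 2) / (t ^ (-α)) ^ 2)
      atTop (nhds 1) := by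
    -- bound function g → 0
    have hg : Tendsto (fun t => |(a t) ^ 2 - 1| +
        (|b t| + |a t * deriv q t - 1|) * (|b t| + |a t * deriv q t + 1|))
        atTop (nhds 0) := by
      have h1 : Tendsto (fun t => |(a t) ^ 2 - 1|) atTop (nhds 0) := by
        have := (((hp.mul hp).sub hone).abs)
        simpa [sq, abs_zero] using this
      have hac : Tendsto (fun t => a t * deriv q t) atTop (nhds 1) := by
        simpa using hp.mul hq'
      have h2 : Tendsto (fun t => |b t| + |a t * deriv q t - 1|) atTop (nhds 0) := by
        have := hb.abs.add ((hac.sub hone).abs)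
        simpa using this
      have h3 : Tendsto (fun t => |b t| + |a t * deriv q t + 1|) atTop (nhds 2) := by
        have := hb.abs.add ((hac.add hone).abs)
        norm_num at this
        exact this
      have := h1.add (h2.mul h3)
      simpa using this
    have hsq : Tendsto (fun t => ((p t * Real.sin (q t)) ^ 2 +
        (deriv p t * Real.sin (q t) + p t * deriv q t * Real.cos (q t)) ^ 2) / (t ^ (-α)) ^ 2 - 1)
        atTop (nhds 0) := by
      apply squeeze_zero_norm' _ hg
      filter_upwards [eventually_gt_atTop (0 : ℝ)] with t ht
      have hT : (0:ℝ) < t ^ (-α) := Real.rpow_pos_of_pos ht _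
      have heq : ((p t * Real.sin (q t)) ^ 2 +
          (deriv p t * Real.sin (q t) + p t * deriv q t * Real.cos (q t)) ^ 2) / (t ^ (-α)) ^ 2
          = (a t) ^ 2 * (Real.sin (q t)) ^ 2 +
            (b t * Real.sin (q t) + a t * deriv q t * Real.cos (q t)) ^ 2 := by
        simp only [ha_def, hb_def]
        field_simp
      rw [Real.norm_eq_abs, heq]
      exact stmt_3_aux _ _ _ _ _ (Real.sin_sq_add_cos_sq (q t))
    have := hsq.add hone
    simpa using this
  -- take square roots
  have hsqrt : Tendsto (fun t => Real.sqrt (((p t * Real.sin (q t)) ^ 2 +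
      (deriv p t * Real.sin (q t) + p t * deriv q t * Real.cos (q t)) ^ 2) / (t ^ (-α)) ^ 2))
      atTop (nhds 1) := by
    have := (Real.continuous_sqrt.tendsto 1).comp hE
    simpa [Function.comp_def] using this
  refine hsqrt.congr' ?_
  filter_upwards [eventually_gt_atTop (0 : ℝ)] with t ht
  have hT : (0:ℝ) < t ^ (-α) := Real.rpow_pos_of_pos ht _
  rw [Real.sqrt_div (by positivity), Real.sqrt_sq hT.le]
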